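/- With the hypotheses and notation of the direct limit construction (α injective), the kernel of the surjective *-homomorphism σ : B → A_∞ (determined by σ(μ_y(a)) = α^y(a)) equals {ξ ∈ B : the net (‖ξ(x)‖)_{x∈Γ} converges to 0}, i.e. ξ ∈ ker σ iff for every ε > 0 there is z ∈ Γ with ‖ξ(x)‖ < ε for all x ≥ z. Moreover ker σ contains the ideal I = cl span{μ_x(a) − μ_y(α_{y−x}(a)) : x < y, a ∈ A}. -/

import Mathlib

open scoped ENNReal

variable {Γ : Type*} [AddCommGroup Γ] [LinearOrder Γ] [IsOrderedAddMonoid Γ] {A : Type*} [NonUnitalCStarAlgebra A]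

/-- The map `μ_x : A → ℓ∞(Γ, A)`, `(μ_x a)(y) = α_{y-x}(a)` for `y ≥ x` and `0` otherwise. -/
noncomputable def mu (α : Γ → (A →⋆ₙₐ[ℂ] A)) (x : Γ) (a : A) :
    lp (fun _ : Γ => A) ∞ :=
  ⟨fun y => if x ≤ y then α (y - x) a else 0,
    memℓp_infty ⟨‖a‖, by
      rintro r ⟨y, rfl⟩
      dsimp only
      split_ifs
      · exact NonUnitalStarAlgHom.norm_apply_le _ _
      · simp⟩⟩

/-- The C*-subalgebra `B = cl span {μ_x(a) : x ∈ Γ, a ∈ A}` of `ℓ∞(Γ, A)`, as a subset. -/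
noncomputable def BSet (α : Γ → (A →⋆ₙₐ[ℂ] A)) : Set (lp (fun _ : Γ => A) ∞) :=
  closure (Submodule.span ℂ {ξ : lp (fun _ : Γ => A) ∞ | ∃ x a, ξ = mu α x a} : Set _)

/-- The ideal `I = cl span {μ_x(a) - μ_y(α_{y-x}(a)) : x < y ∈ Γ, a ∈ A}`, as a subset. -/
noncomputable def ISet (α : Γ → (A →⋆ₙₐ[ℂ] A)) : Set (lp (fun _ : Γ => A) ∞) :=
  closure (Submodule.span ℂ
    {ξ : lp (fun _ : Γ => A) ∞ | ∃ x y a, x < y ∧ ξ = mu α x a - mu α y (α (y - x) a)} : Set _)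
/-- With `α` injective and `σ : B → A∞` the surjective *-homomorphism determined by
`σ(μ_y(a)) = ι_y(a)` (where `A∞` is the direct limit with isometric canonical maps `ι`),
the kernel of `σ` is exactly `{ξ ∈ B : ‖ξ(x)‖ → 0}` (i.e. for each `ε > 0` eventually
`‖ξ(x)‖ < ε` for large `x`), and it contains the ideal `I`. -/
theorem ker_sigma_eq_and_contains_I
    {Γ : Type*} [AddCommGroup Γ] [LinearOrder Γ] [IsOrderedAddMonoid Γ] {A : Type*} [NonUnitalCStarAlgebra A]
    (α : Γ → (A →⋆ₙₐ[ℂ] A))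
    (hα0 : ∀ a : A, α 0 a = a)
    (hαadd : ∀ s t : Γ, 0 ≤ s → 0 ≤ t → ∀ a : A, α (s + t) a = α s (α t a))
    (hinj : ∀ s : Γ, 0 ≤ s → Function.Injective (α s))
    (Ainf : Type*) [NonUnitalCStarAlgebra Ainf]
    (ι : Γ → (A →⋆ₙₐ[ℂ] Ainf))
    (hcompat : ∀ s t : Γ, s ≤ t → ∀ a : A, ι t (α (t - s) a) = ι s a)
    (hiso : ∀ (s : Γ) (a : A), ‖ι s a‖ = ‖a‖)
    (hdense : DenseRange fun p : Γ × A => ι p.1 p.2)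
    (σ : {ξ : lp (fun _ : Γ => A) ∞ // ξ ∈ BSet α} → Ainf)
    (hcont : Continuous σ)
    (hadd : ∀ ξ η (hξ : ξ ∈ BSet α) (hη : η ∈ BSet α) (hs : ξ + η ∈ BSet α),
      σ ⟨ξ + η, hs⟩ = σ ⟨ξ, hξ⟩ + σ ⟨η, hη⟩)
    (hsmul : ∀ (c : ℂ) ξ (hξ : ξ ∈ BSet α) (hs : c • ξ ∈ BSet α),
      σ ⟨c • ξ, hs⟩ = c • σ ⟨ξ, hξ⟩)
    (hmu : ∀ (y : Γ) (a : A) (h : mu α y a ∈ BSet α), σ ⟨mu α y a, h⟩ = ι y a) :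
    (∀ ξ (hξ : ξ ∈ BSet α),
      (σ ⟨ξ, hξ⟩ = 0 ↔ ∀ ε : ℝ, 0 < ε → ∃ z : Γ, ∀ x : Γ, z ≤ x → ‖ξ x‖ < ε)) ∧
    (∀ ξ (hξI : ξ ∈ ISet α) (hξB : ξ ∈ BSet α), σ ⟨ξ, hξB⟩ = 0) := by
  classical
  set S : Set (lp (fun _ : Γ => A) ∞) := {ξ | ∃ x a, ξ = mu α x a} with hS
  -- each α t (t ≥ 0) is isometric
  have hαiso : ∀ t : Γ, 0 ≤ t → ∀ a : A, ‖α t a‖ = ‖a‖ := by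
    intro t ht a
    have h := hcompat 0 t ht a
    rw [sub_zero] at h
    calc ‖α t a‖ = ‖ι t (α t a)‖ := (hiso t _).symm
      _ = ‖ι 0 a‖ := by rw [h]
      _ = ‖a‖ := hiso 0 a
  have hmuapp : ∀ (x : Γ) (a : A) (y : Γ),
      (mu α x a : lp (fun _ : Γ => A) ∞) y = if x ≤ y then α (y - x) a else 0 :=
    fun _ _ _ => rfl
  have hspanB : ∀ η : lp (fun _ : Γ => A) ∞, η ∈ Submodule.span ℂ S → η ∈ BSet α :=
    fun η hη => subset_closure hη
  have h0B : (0 : lp (fun _ : Γ => A) ∞) ∈ BSet α := hspanB 0 (Submodule.zero_mem _)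
  have hσ0 : σ ⟨0, h0B⟩ = 0 := by
    have hs : (0 : ℂ) • (0 : lp (fun _ : Γ => A) ∞) ∈ BSet α := by
      rw [zero_smul]; exact h0B
    have h := hsmul 0 0 h0B hs
    have he : (⟨(0 : ℂ) • (0 : lp (fun _ : Γ => A) ∞), hs⟩ : {ξ // ξ ∈ BSet α}) = ⟨0, h0B⟩ :=
      Subtype.ext (zero_smul _ _)
    rw [he, zero_smul] at h
    exact h
  -- structure of span elements
  have key : ∀ η (hη : η ∈ Submodule.span ℂ S),
      ∃ (z : Γ) (b : A), (∀ x : Γ, z ≤ x → η x = α (x - z) b) ∧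
        σ ⟨η, hspanB η hη⟩ = ι z b := by
    intro η hη
    induction hη using Submodule.span_induction with
    | mem ξ hξ =>
      obtain ⟨x, a, rfl⟩ := hξ
      refine ⟨x, a, fun y hy => by rw [hmuapp, if_pos hy], hmu x a _⟩
    | zero =>
      refine ⟨0, 0, fun x _ => by simp [map_zero], ?_⟩
      rw [map_zero]
      exact hσ0
    | add ξ₁ ξ₂ h₁ h₂ ih₁ ih₂ =>
      obtain ⟨z₁, b₁, hv₁, hs₁⟩ := ih₁
      obtain ⟨z₂, b₂, hv₂, hs₂⟩ := ih₂
      set m := max z₁ z₂ with hm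
      refine ⟨m, α (m - z₁) b₁ + α (m - z₂) b₂, ?_, ?_⟩
      · intro x hx
        have hx1 : z₁ ≤ x := le_trans (le_max_left _ _) hx
        have hx2 : z₂ ≤ x := le_trans (le_max_right _ _) hx
        have e1 : α (x - m) (α (m - z₁) b₁) = α (x - z₁) b₁ := by
          rw [← hαadd _ _ (sub_nonneg.2 hx) (sub_nonneg.2 (le_max_left _ _)),
            sub_add_sub_cancel]
        have e2 : α (x - m) (α (m - z₂) b₂) = α (x - z₂) b₂ := by
          rw [← hαadd _ _ (sub_nonneg.2 hx) (sub_nonneg.2 (le_max_right _ _)),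
            sub_add_sub_cancel]
        have : (ξ₁ + ξ₂) x = ξ₁ x + ξ₂ x := by rw [lp.coeFn_add]; rfl
        rw [this, hv₁ x hx1, hv₂ x hx2, map_add, e1, e2]
      · rw [hadd ξ₁ ξ₂ (hspanB _ h₁) (hspanB _ h₂) _, hs₁, hs₂, map_add,
          hcompat z₁ m (le_max_left _ _), hcompat z₂ m (le_max_right _ _)]
    | smul c ξ h ih =>
      obtain ⟨z, b, hv, hs⟩ := ih
      refine ⟨z, c • b, ?_, ?_⟩
      · intro x hx
        have : (c • ξ) x = c • (ξ x) := by rw [lp.coeFn_smul]; rfl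
        rw [this, hv x hx, map_smul]
      · rw [hsmul c ξ (hspanB _ h) _, hs, map_smul]
    -- membership of lp(-) applications bounded by norm
  have happle : ∀ (η : lp (fun _ : Γ => A) ∞) (x : Γ), ‖η x‖ ≤ ‖η‖ :=
    fun η x => lp.norm_apply_le_norm ENNReal.top_ne_zero η x
  -- helper: a ≤ c from ∀ ε > 0, a < c + ε
  have hle : ∀ a c : ℝ, (∀ ε : ℝ, 0 < ε → a < c + ε) → a ≤ c := by
    intro a c h
    by_contra hlt
    push_neg at hlt
    have := h (a - c) (by linarith)
    linarith
  have main : ∀ ξ (hξ : ξ ∈ BSet α),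
      (σ ⟨ξ, hξ⟩ = 0 ↔ ∀ ε : ℝ, 0 < ε → ∃ z : Γ, ∀ x : Γ, z ≤ x → ‖ξ x‖ < ε) := by
    intro ξ hξ
    constructor
    · intro hσξ ε hε
      obtain ⟨δ, hδ, hδc⟩ := Metric.continuous_iff.mp hcont ⟨ξ, hξ⟩ (ε / 2) (by linarith)
      obtain ⟨η, hηmem, hηdist⟩ := Metric.mem_closure_iff.mp hξ (min δ (ε / 2))
        (lt_min hδ (by linarith))
      have hηS : η ∈ Submodule.span ℂ S := hηmem
      obtain ⟨z, b, hv, hσs⟩ := key η hηS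
      have hdsub : dist (⟨η, hspanB η hηS⟩ : {ξ // ξ ∈ BSet α}) ⟨ξ, hξ⟩ < δ := by
        rw [Subtype.dist_eq, dist_comm]
        exact lt_of_lt_of_le hηdist (min_le_left _ _)
      have hb : ‖b‖ < ε / 2 := by
        have h1 := hδc _ hdsub
        rw [hσξ, dist_zero_right, hσs, hiso] at h1
        exact h1
      refine ⟨z, fun x hx => ?_⟩
      have h2 : ‖ξ x - η x‖ ≤ ‖ξ - η‖ := by
        have : (ξ - η) x = ξ x - η x := by rw [lp.coeFn_sub]; rfl
        rw [← this]; exact happle _ _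
      have h3 : ‖ξ - η‖ < ε / 2 := by
        rw [← dist_eq_norm]
        exact lt_of_lt_of_le hηdist (min_le_right _ _)
      calc ‖ξ x‖ = ‖η x + (ξ x - η x)‖ := by congr 1; abel
        _ ≤ ‖η x‖ + ‖ξ x - η x‖ := norm_add_le _ _
        _ < ε / 2 + ε / 2 := by
            refine add_lt_add_of_lt_of_le ?_ (le_trans h2 (le_of_lt h3))
            rw [hv x hx, hαiso _ (sub_nonneg.2 hx)]
            exact hb
        _ = ε := by ring
    · intro h
      rw [← norm_le_zero_iff]
      refine hle _ _ fun ε hε => ?_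
      rw [zero_add]
      obtain ⟨δ, hδ, hδc⟩ := Metric.continuous_iff.mp hcont ⟨ξ, hξ⟩ (ε / 2) (by linarith)
      obtain ⟨η, hηmem, hηdist⟩ := Metric.mem_closure_iff.mp hξ (min δ (ε / 4))
        (lt_min hδ (by linarith))
      have hηS : η ∈ Submodule.span ℂ S := hηmem
      obtain ⟨z, b, hv, hσs⟩ := key η hηS
      have hdsub : dist (⟨η, hspanB η hηS⟩ : {ξ // ξ ∈ BSet α}) ⟨ξ, hξ⟩ < δ := by
        rw [Subtype.dist_eq, dist_comm]
        exact lt_of_lt_of_le hηdist (min_le_left _ _)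
      have hnd : ‖ξ - η‖ < ε / 4 := by
        rw [← dist_eq_norm]
        exact lt_of_lt_of_le hηdist (min_le_right _ _)
      have hb : ‖b‖ ≤ ε / 4 := by
        refine hle _ _ fun ε' hε' => ?_
        obtain ⟨z', hz'⟩ := h ε' hε'
        set x := max z z' with hx
        have h1 : ‖η x‖ = ‖b‖ := by rw [hv x (le_max_left _ _), hαiso _ (sub_nonneg.2 (le_max_left _ _))]
        have h2 : ‖η x - ξ x‖ ≤ ‖ξ - η‖ := by
          have e : (ξ - η) x = ξ x - η x := by rw [lp.coeFn_sub]; rfl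
          rw [← norm_neg]
          simp only [neg_sub]
          rw [← e]; exact happle _ _
        have h3 := hz' x (le_max_right _ _)
        calc ‖b‖ = ‖η x‖ := h1.symm
          _ = ‖ξ x + (η x - ξ x)‖ := by congr 1; abel
          _ ≤ ‖ξ x‖ + ‖η x - ξ x‖ := norm_add_le _ _
          _ < ε' + ε / 4 := add_lt_add_of_lt_of_le h3 (le_trans h2 (le_of_lt hnd))
          _ = ε / 4 + ε' := by ring
      have hσd : dist (σ ⟨η, hspanB η hηS⟩) (σ ⟨ξ, hξ⟩) < ε / 2 := hδc _ hdsub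
      calc ‖σ ⟨ξ, hξ⟩‖ ≤ ‖σ ⟨η, hspanB η hηS⟩‖ + dist (σ ⟨η, hspanB η hηS⟩) (σ ⟨ξ, hξ⟩) := by
            rw [dist_eq_norm]
            have := norm_add_le (σ ⟨η, hspanB η hηS⟩ - (σ ⟨η, hspanB η hηS⟩ - σ ⟨ξ, hξ⟩))
              (0 : Ainf)
            calc ‖σ ⟨ξ, hξ⟩‖ = ‖σ ⟨η, hspanB η hηS⟩ - (σ ⟨η, hspanB η hηS⟩ - σ ⟨ξ, hξ⟩)‖ := by
                  congr 1; abel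
              _ ≤ ‖σ ⟨η, hspanB η hηS⟩‖ + ‖σ ⟨η, hspanB η hηS⟩ - σ ⟨ξ, hξ⟩‖ :=
                  norm_sub_le _ _
        _ < ε / 4 + ε / 2 := by
            refine add_lt_add_of_le_of_lt ?_ hσd
            rw [hσs, hiso]; exact hb
        _ < ε := by linarith
  refine ⟨main, ?_⟩
  -- the ideal part
  intro ξ hξI hξB
  rw [main ξ hξB]
  intro ε hε
  set T : Set (lp (fun _ : Γ => A) ∞) :=
    {ξ | ∃ x y a, x < y ∧ ξ = mu α x a - mu α y (α (y - x) a)} with hT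
  have keyI : ∀ η ∈ Submodule.span ℂ T, ∃ z : Γ, ∀ x : Γ, z ≤ x → η x = 0 := by
    intro η hη
    induction hη using Submodule.span_induction with
    | mem ζ hζ =>
      obtain ⟨x, y, a, hxy, rfl⟩ := hζ
      refine ⟨y, fun w hw => ?_⟩
      have hxw : x ≤ w := le_trans (le_of_lt hxy) hw
      have e : (mu α x a - mu α y (α (y - x) a)) w
          = (mu α x a : lp (fun _ : Γ => A) ∞) w - (mu α y (α (y - x) a) : lp (fun _ : Γ => A) ∞) w := by
        rw [lp.coeFn_sub]; rfl
      rw [e, hmuapp, hmuapp, if_pos hxw, if_pos hw,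
        ← hαadd _ _ (sub_nonneg.2 hw) (sub_nonneg.2 (le_of_lt hxy)), sub_add_sub_cancel,
        sub_self]
    | zero => exact ⟨0, fun x _ => by simp⟩
    | add ζ₁ ζ₂ h₁ h₂ ih₁ ih₂ =>
      obtain ⟨z₁, hz₁⟩ := ih₁
      obtain ⟨z₂, hz₂⟩ := ih₂
      refine ⟨max z₁ z₂, fun x hx => ?_⟩
      have e : (ζ₁ + ζ₂) x = ζ₁ x + ζ₂ x := by rw [lp.coeFn_add]; rfl
      rw [e, hz₁ x (le_trans (le_max_left _ _) hx), hz₂ x (le_trans (le_max_right _ _) hx),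
        add_zero]
    | smul c ζ h ih =>
      obtain ⟨z, hz⟩ := ih
      refine ⟨z, fun x hx => ?_⟩
      have e : (c • ζ) x = c • (ζ x) := by rw [lp.coeFn_smul]; rfl
      rw [e, hz x hx, smul_zero]
  obtain ⟨η, hηmem, hηdist⟩ := Metric.mem_closure_iff.mp hξI ε hε
  obtain ⟨z, hz⟩ := keyI η hηmem
  refine ⟨z, fun x hx => ?_⟩
  have e : (ξ - η) x = ξ x - η x := by rw [lp.coeFn_sub]; rfl
  calc ‖ξ x‖ = ‖ξ x - η x‖ := by rw [hz x hx, sub_zero]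
    _ ≤ ‖ξ - η‖ := by rw [← e]; exact happle _ _
    _ < ε := by rw [← dist_eq_norm]; exact hηdist
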